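/- For a fixed positive integer s, define h_{s,i,j} by the recursion h_{s,0,j} = C(s+j-1,j)(s-j)/s, h_{s,i,j} = -((s-j+1)/i) h_{s,i-1,j-1} - ((j-i)/i) h_{s,i-1,j}, and h_{s,i,j} = 0 for j ≤ i. Then for each j with 1 ≤ j ≤ s, the column sum satisfies ∑_{i=0}^{j-1} h_{s,i,j} = (-1)^{j+1} (s-1) C(s-1, j-1). -/

import Mathlib

/-- The two-dimensional coefficient sequence of the paper. -/
def h (s : ℕ) : ℕ → ℕ → ℚ
  | 0, j => if j ≤ 0 then 0 else (Nat.choose (s + j - 1) j : ℚ) * ((s : ℚ) - j) / s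
  | i + 1, j =>
      if j ≤ i + 1 then 0
      else -(((s : ℚ) - j + 1) / (i + 1 : ℚ)) * h s i (j - 1)
           - (((j : ℚ) - (i + 1 : ℚ)) / (i + 1 : ℚ)) * h s i j

open Finset

lemma negpow (a b : ℕ) (hab : a % 2 = b % 2) : (-1:ℚ)^a = (-1)^b := by
  rcases Nat.even_or_odd a with he | ho
  · have hb : Even b := Nat.even_iff.mpr (by rw [← hab]; exact Nat.even_iff.mp he)
    rw [he.neg_one_pow, hb.neg_one_pow]
  · have hb : Odd b := Nat.odd_iff.mpr (by rw [← hab]; exact Nat.odd_iff.mp ho)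
    rw [ho.neg_one_pow, hb.neg_one_pow]

lemma altQ (n : ℕ) : ∑ i ∈ range (n+1), (-1:ℚ)^i * (Nat.choose n i) = if n = 0 then 1 else 0 := by
  have h := Int.alternating_sum_range_choose (n := n)
  have h2 : ((∑ i ∈ range (n+1), (-1:ℤ)^i * (n.choose i) : ℤ) : ℚ)
      = ((if n = 0 then 1 else 0 : ℤ) : ℚ) := by rw [h]
  push_cast at h2
  convert h2 using 2

lemma Pid (n : ℕ) : ∀ m j : ℕ, m ≤ n → j ≤ m →
    (∑ l ∈ range (j+1), (-1:ℚ)^(j+l) * (Nat.choose n l) * (Nat.choose (m - l) (j - l)))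
      = Nat.choose (n - m + j - 1) j := by
  induction n with
  | zero =>
    intro m j hm hj
    interval_cases m
    interval_cases j
    simp
  | succ n ih =>
    intro m j hm hj
    rcases Nat.eq_zero_or_pos j with rfl | hj1
    · simp
    obtain ⟨j', rfl⟩ : ∃ j', j = j' + 1 := ⟨j - 1, by omega⟩
    rcases eq_or_lt_of_le hm with rfl | hmn
    · -- base: m = n+1
      have key : ∀ l ∈ range (j'+1+1),
          (-1:ℚ)^(j'+1+l) * (Nat.choose (n+1) l) * (Nat.choose (n+1 - l) (j'+1 - l))
          = ((-1:ℚ)^(j'+1) * (Nat.choose (n+1) (j'+1))) * ((-1:ℚ)^l * (Nat.choose (j'+1) l)) := by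
        intro l hl
        rw [mem_range] at hl
        have hln : l ≤ j' + 1 := by omega
        have := Nat.choose_mul (n := n+1) (k := j'+1) (s := l) hln
        have hc : ((n+1).choose (j'+1) * (j'+1).choose l : ℚ)
            = ((n+1).choose l * ((n+1) - l).choose ((j'+1) - l) : ℚ) := by exact_mod_cast this
        linear_combination (-((-1:ℚ)^(j'+1+l))) * hc
      rw [Finset.sum_congr rfl key, ← Finset.mul_sum, altQ (j'+1)]
      simp [Nat.choose_eq_zero_of_lt (show j' < j'+1 by omega), Nat.sub_self]
    · -- step: m ≤ n
      have hmn' : m ≤ n := by omega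
      have hm1 : 1 ≤ m := by omega
      rw [Finset.sum_range_succ']
      have split : ∀ k ∈ range (j'+1),
          (-1:ℚ)^(j'+1+(k+1)) * (Nat.choose (n+1) (k+1)) * (Nat.choose (m - (k+1)) (j'+1 - (k+1)))
          = (-1:ℚ)^(j'+k) * (Nat.choose n k) * (Nat.choose ((m-1) - k) (j' - k))
            + (-1:ℚ)^(j'+1+(k+1)) * (Nat.choose n (k+1)) * (Nat.choose (m - (k+1)) (j'+1 - (k+1))) := by
        intro k hk
        have hcast : ((n+1).choose (k+1) : ℚ) = n.choose k + n.choose (k+1) := by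
          exact_mod_cast Nat.choose_succ_succ n k
        have hCeq : ((m - (k+1)).choose (j'+1 - (k+1)) : ℚ) = (((m-1) - k).choose (j' - k) : ℚ) := by
          rw [show m-(k+1) = (m-1)-k from by omega, show j'+1-(k+1)=j'-k from by omega]
        have hs : (-1:ℚ)^(j'+1+(k+1)) = (-1)^(j'+k) := by
          rw [show j'+1+(k+1) = (j'+k)+2 from by ring, pow_add]; norm_num
        rw [hcast, hCeq, hs]; ring
      rw [Finset.sum_congr rfl split, Finset.sum_add_distrib]
      have hA := ih (m-1) j' (by omega) (by omega)
      have hBf : (∑ k ∈ range (j'+1), (-1:ℚ)^(j'+1+(k+1)) * (Nat.choose n (k+1)) * (Nat.choose (m - (k+1)) (j'+1 - (k+1))))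
          + (-1:ℚ)^(j'+1+0) * (Nat.choose (n+1) 0) * (Nat.choose (m-0) (j'+1-0))
          = Nat.choose (n - m + (j'+1) - 1) (j'+1) := by
        have hBsum := ih m (j'+1) hmn' hj
        rw [Finset.sum_range_succ'] at hBsum
        rw [show (((n+1).choose 0 : ℕ) : ℚ) = ((n.choose 0 : ℕ) : ℚ) by simp]
        exact hBsum
      rw [add_assoc, hA, hBf]
      have e1 : n - (m-1) + j' - 1 = n - m + j' := by omega
      have e2 : n - m + (j'+1) - 1 = n - m + j' := by omega
      have e3 : n + 1 - m + (j'+1) - 1 = (n - m + j') + 1 := by omega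
      rw [e1, e2, e3, Nat.choose_succ_succ]
      push_cast; ring


def cQ (s l : ℕ) : ℚ := (Nat.choose (2*s) l : ℚ) - (Nat.choose (2*s) (l-1) : ℚ) - (Nat.choose s l : ℚ)

def HH (s i j : ℕ) : ℚ :=
  ∑ μ ∈ range j, (-1:ℚ)^i * (Nat.choose μ i : ℚ) * cQ s (μ+1)
      * ((-1:ℚ)^(j+(μ+1)) * (Nat.choose (s-(μ+1)) (j-(μ+1)) : ℚ))

lemma chooseQ1 (μ i : ℕ) :
    ((i:ℚ)+1) * (Nat.choose μ (i+1) : ℚ) = ((μ:ℚ) - i) * (Nat.choose μ i : ℚ) := by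
  rcases le_or_gt (i+1) μ with hle | hlt
  · have := Nat.choose_succ_right_eq μ i
    have hc : (Nat.choose μ (i+1) : ℚ) * ((i:ℚ)+1) = (Nat.choose μ i : ℚ) * ((μ:ℚ) - i) := by
      have h2 : ((Nat.choose μ (i+1) * (i+1) : ℕ) : ℚ) = ((Nat.choose μ i * (μ - i) : ℕ) : ℚ) := by
        rw [this]
      push_cast [Nat.cast_sub (by omega : i ≤ μ)] at h2
      linarith [h2]
    linarith [hc]
  · rcases le_or_gt i μ with hle2 | hlt2
    · have hμ : μ = i := by omega
      subst hμ
      simp [Nat.choose_eq_zero_of_lt (show μ < μ+1 by omega)]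
    · simp [Nat.choose_eq_zero_of_lt hlt2, Nat.choose_eq_zero_of_lt (show μ < i+1 by omega)]

lemma chooseQ2 (n k : ℕ) (h1 : 1 ≤ k) (h2 : k - 1 ≤ n) :
    (k:ℚ) * (Nat.choose n k : ℚ) = ((n:ℚ) - k + 1) * (Nat.choose n (k-1) : ℚ) := by
  have hh := Nat.choose_succ_right_eq n (k-1)
  rw [show k-1+1 = k from by omega] at hh
  have h2' : ((Nat.choose n k * k : ℕ):ℚ) = ((Nat.choose n (k-1) * (n - (k-1)) : ℕ):ℚ) := by
    rw [hh]
  push_cast [Nat.cast_sub h2, Nat.cast_sub h1] at h2'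
  linear_combination h2'

lemma step_key (s i q : ℕ) (hq : i + 1 ≤ q) (hqs : q + 1 ≤ s) :
    ((i:ℚ)+1) * HH s (i+1) (q+1)
      = -(((s:ℚ)-q) * HH s i q) - (((q:ℚ)-i) * HH s i (q+1)) := by
  have e2 : (∑ μ ∈ range (q+1), (-1:ℚ)^i * (Nat.choose μ i : ℚ) * cQ s (μ+1)
        * ((-1:ℚ)^(q+(μ+1)) * (Nat.choose (s-(μ+1)) (q-(μ+1)) : ℚ)))
      = HH s i q + (-1:ℚ)^(i+1) * (Nat.choose q i : ℚ) * cQ s (q+1) := by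
    rw [Finset.sum_range_succ]
    unfold HH
    rw [show q - (q+1) = 0 from by omega]
    rw [show (-1:ℚ)^(q+(q+1)) = -1 from by
      rw [show q+(q+1) = 2*q+1 from by ring, pow_succ, pow_mul]; norm_num]
    simp [pow_succ]
  have combined : ∑ μ ∈ range (q+1),
      ( ((i:ℚ)+1) * ((-1:ℚ)^(i+1) * (Nat.choose μ (i+1) : ℚ) * cQ s (μ+1)
          * ((-1:ℚ)^((q+1)+(μ+1)) * (Nat.choose (s-(μ+1)) ((q+1)-(μ+1)) : ℚ)))
        + ((s:ℚ)-q) * ((-1:ℚ)^i * (Nat.choose μ i : ℚ) * cQ s (μ+1)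
          * ((-1:ℚ)^(q+(μ+1)) * (Nat.choose (s-(μ+1)) (q-(μ+1)) : ℚ)))
        + ((q:ℚ)-i) * ((-1:ℚ)^i * (Nat.choose μ i : ℚ) * cQ s (μ+1)
          * ((-1:ℚ)^((q+1)+(μ+1)) * (Nat.choose (s-(μ+1)) ((q+1)-(μ+1)) : ℚ))) )
      = ((s:ℚ)-q) * ((-1:ℚ)^(i+1) * (Nat.choose q i : ℚ) * cQ s (q+1)) := by
    rw [Finset.sum_range_succ]
    have hzero : ∀ μ ∈ range q,
        ( ((i:ℚ)+1) * ((-1:ℚ)^(i+1) * (Nat.choose μ (i+1) : ℚ) * cQ s (μ+1)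
            * ((-1:ℚ)^((q+1)+(μ+1)) * (Nat.choose (s-(μ+1)) ((q+1)-(μ+1)) : ℚ)))
          + ((s:ℚ)-q) * ((-1:ℚ)^i * (Nat.choose μ i : ℚ) * cQ s (μ+1)
            * ((-1:ℚ)^(q+(μ+1)) * (Nat.choose (s-(μ+1)) (q-(μ+1)) : ℚ)))
          + ((q:ℚ)-i) * ((-1:ℚ)^i * (Nat.choose μ i : ℚ) * cQ s (μ+1)
            * ((-1:ℚ)^((q+1)+(μ+1)) * (Nat.choose (s-(μ+1)) ((q+1)-(μ+1)) : ℚ))) ) = 0 := by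
      intro μ hμ
      rw [mem_range] at hμ
      have hf1 := chooseQ1 μ i
      have hf2 := chooseQ2 (s-(μ+1)) (q-μ) (by omega) (by omega)
      have hnn1 : (q+1)-(μ+1) = q-μ := by omega
      have hnn2 : q-(μ+1) = (q-μ)-1 := by omega
      have hcast1 : (((q:ℕ)-(μ:ℕ) : ℕ) : ℚ) = (q:ℚ) - μ := by
        push_cast [Nat.cast_sub (by omega : μ ≤ q)]; ring
      have hcast2 : (((s:ℕ)-((μ:ℕ)+1) : ℕ) : ℚ) = (s:ℚ) - μ - 1 := by
        push_cast [Nat.cast_sub (by omega : μ+1 ≤ s)]; ring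
      rw [hnn1, hnn2] at *
      rw [hcast1, hcast2] at hf2
      have hsgn : (-1:ℚ)^((q+1)+(μ+1)) = -(-1:ℚ)^(q+(μ+1)) := by
        rw [show (q+1)+(μ+1) = (q+(μ+1))+1 from by ring, pow_succ]; ring
      rw [hsgn]
      have hpow : (-1:ℚ)^(i+1) = -(-1:ℚ)^i := by rw [pow_succ]; ring
      rw [hpow]
      linear_combination ((-1:ℚ)^i * cQ s (μ+1) * (-1:ℚ)^(q+(μ+1))
          * (Nat.choose (s-(μ+1)) (q-μ) : ℚ)) * hf1
        - ((-1:ℚ)^i * (Nat.choose μ i : ℚ) * cQ s (μ+1) * (-1:ℚ)^(q+(μ+1))) * hf2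
    rw [Finset.sum_eq_zero hzero]
    -- last term μ = q
    rw [show (q+1)-(q+1) = 0 from by omega, show q - (q+1) = 0 from by omega]
    have hsgn2 : (-1:ℚ)^((q+1)+(q+1)) = 1 := by
      rw [show (q+1)+(q+1) = 2*(q+1) from by ring, pow_mul]; norm_num
    have hsgn3 : (-1:ℚ)^(q+(q+1)) = -1 := by
      rw [show q+(q+1) = 2*q+1 from by ring, pow_succ, pow_mul]; norm_num
    rw [hsgn2, hsgn3]
    have hf1 := chooseQ1 q i
    have hpow : (-1:ℚ)^(i+1) = -(-1:ℚ)^i := by rw [pow_succ]; ring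
    rw [hpow]
    simp only [Nat.choose_zero_right, Nat.cast_one]
    linear_combination (-((-1:ℚ)^i * cQ s (q+1))) * hf1
  -- now expand combined into the three HH sums
  have expand : ∑ μ ∈ range (q+1),
      ( ((i:ℚ)+1) * ((-1:ℚ)^(i+1) * (Nat.choose μ (i+1) : ℚ) * cQ s (μ+1)
          * ((-1:ℚ)^((q+1)+(μ+1)) * (Nat.choose (s-(μ+1)) ((q+1)-(μ+1)) : ℚ)))
        + ((s:ℚ)-q) * ((-1:ℚ)^i * (Nat.choose μ i : ℚ) * cQ s (μ+1)
          * ((-1:ℚ)^(q+(μ+1)) * (Nat.choose (s-(μ+1)) (q-(μ+1)) : ℚ)))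
        + ((q:ℚ)-i) * ((-1:ℚ)^i * (Nat.choose μ i : ℚ) * cQ s (μ+1)
          * ((-1:ℚ)^((q+1)+(μ+1)) * (Nat.choose (s-(μ+1)) ((q+1)-(μ+1)) : ℚ))) )
      = ((i:ℚ)+1) * HH s (i+1) (q+1)
        + ((s:ℚ)-q) * (HH s i q + (-1:ℚ)^(i+1) * (Nat.choose q i : ℚ) * cQ s (q+1))
        + ((q:ℚ)-i) * HH s i (q+1) := by
    rw [Finset.sum_add_distrib, Finset.sum_add_distrib, ← Finset.mul_sum, ← Finset.mul_sum,
      ← Finset.mul_sum, ← e2]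
    unfold HH
    ring
  rw [expand] at combined
  linarith [combined]


lemma HH_zero (s j : ℕ) (hs : 1 ≤ s) (hj1 : 1 ≤ j) (hj2 : j ≤ s) :
    HH s 0 j = (Nat.choose (s+j-1) j : ℚ) - (Nat.choose (s+j-1) (j-1) : ℚ) := by
  have expand : HH s 0 j
      = (∑ μ ∈ range j, (-1:ℚ)^(j+(μ+1)) * (Nat.choose (2*s) (μ+1) : ℚ)
            * (Nat.choose (s-(μ+1)) (j-(μ+1)) : ℚ))
        - (∑ μ ∈ range j, (-1:ℚ)^((j-1)+μ) * (Nat.choose (2*s) μ : ℚ)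
            * (Nat.choose ((s-1)-μ) ((j-1)-μ) : ℚ))
        - (∑ μ ∈ range j, (-1:ℚ)^(j+(μ+1)) * (Nat.choose s (μ+1) : ℚ)
            * (Nat.choose (s-(μ+1)) (j-(μ+1)) : ℚ)) := by
    unfold HH cQ
    rw [← Finset.sum_sub_distrib, ← Finset.sum_sub_distrib]
    apply Finset.sum_congr rfl
    intro μ hμ
    rw [show (μ+1)-1 = μ from rfl]
    rw [show (s-1)-μ = s-(μ+1) from by omega, show (j-1)-μ = j-(μ+1) from by omega]
    rw [show (-1:ℚ)^((j-1)+μ) = (-1)^(j+(μ+1)) from negpow _ _ (by omega)]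
    simp only [Nat.choose_zero_right, Nat.cast_one, pow_zero]
    ring
  have h1 := Pid (2*s) s j (by omega) hj2
  rw [Finset.sum_range_succ'] at h1
  rw [show 2*s - s + j - 1 = s+j-1 from by omega] at h1
  have h3 := Pid s s j (le_refl s) hj2
  rw [Finset.sum_range_succ'] at h3
  rw [show s - s + j - 1 = j - 1 from by omega,
    Nat.choose_eq_zero_of_lt (show j - 1 < j from by omega)] at h3
  have h2 := Pid (2*s) (s-1) (j-1) (by omega) (by omega)
  rw [show j-1+1 = j from by omega] at h2
  rw [show 2*s - (s-1) + (j-1) - 1 = s+j-1 from by omega] at h2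
  rw [expand, h2, eq_sub_of_add_eq h1, eq_sub_of_add_eq h3]
  simp only [Nat.choose_zero_right, Nat.cast_one, Nat.sub_zero, Nat.add_zero, Nat.cast_zero]
  ring

lemma h_eq_HH (s : ℕ) (hs : 1 ≤ s) : ∀ i j, j ≤ s → h s i j = HH s i j := by
  intro i
  induction i with
  | zero =>
    intro j hj
    rcases Nat.eq_zero_or_pos j with rfl | hj1
    · simp [h, HH]
    · rw [HH_zero s j hs hj1 hj]
      simp only [h]
      rw [if_neg (by omega)]
      have key := chooseQ2 (s+j-1) j hj1 (by omega)
      have hcast : (((s+j-1 : ℕ)) : ℚ) = (s:ℚ) + j - 1 := by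
        push_cast [Nat.cast_sub (show 1 ≤ s + j by omega)]; ring
      rw [hcast] at key
      have hs0 : (s:ℚ) ≠ 0 := Nat.cast_ne_zero.mpr (by omega)
      field_simp
      linear_combination -key
  | succ i ih =>
    intro j hj
    by_cases hcase : j ≤ i+1
    · simp only [h]
      rw [if_pos hcase]
      symm
      unfold HH
      apply Finset.sum_eq_zero
      intro μ hμ
      rw [mem_range] at hμ
      rw [Nat.choose_eq_zero_of_lt (show μ < i+1 by omega)]
      simp
    · push_neg at hcase
      obtain ⟨q, rfl⟩ : ∃ q, j = q+1 := ⟨j-1, by omega⟩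
      have key := step_key s i q (by omega) (by omega)
      have ih1 := ih q (by omega)
      have ih2 := ih (q+1) (by omega)
      simp only [h]
      rw [if_neg (by omega), show (q+1) - 1 = q from rfl, ih1, ih2]
      have hi : ((i:ℚ)+1) ≠ 0 := by positivity
      push_cast
      field_simp
      linear_combination -key

/-- Column sums of the sequence, for 1 ≤ j ≤ s. -/
theorem stmt10 (s : ℕ) (hs : 1 ≤ s) (j : ℕ) (hj1 : 1 ≤ j) (hj2 : j ≤ s) :
    ∑ i ∈ Finset.range j, h s i j
      = (-1 : ℚ) ^ (j + 1) * ((s : ℚ) - 1) * (Nat.choose (s - 1) (j - 1) : ℚ) := by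
  rw [Finset.sum_congr rfl (fun i _ => h_eq_HH s hs i j hj2)]
  unfold HH
  rw [Finset.sum_comm]
  have inner : ∀ μ ∈ range j,
      (∑ i ∈ range j, (-1:ℚ)^i * (Nat.choose μ i : ℚ) * cQ s (μ+1)
        * ((-1:ℚ)^(j+(μ+1)) * (Nat.choose (s-(μ+1)) (j-(μ+1)) : ℚ)))
      = (if μ = 0 then 1 else 0) * (cQ s (μ+1)
        * ((-1:ℚ)^(j+(μ+1)) * (Nat.choose (s-(μ+1)) (j-(μ+1)) : ℚ))) := by
    intro μ hμ
    rw [mem_range] at hμ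
    have factor : ∀ i ∈ range j,
        (-1:ℚ)^i * (Nat.choose μ i : ℚ) * cQ s (μ+1)
          * ((-1:ℚ)^(j+(μ+1)) * (Nat.choose (s-(μ+1)) (j-(μ+1)) : ℚ))
        = ((-1:ℚ)^i * (Nat.choose μ i : ℚ)) * (cQ s (μ+1)
          * ((-1:ℚ)^(j+(μ+1)) * (Nat.choose (s-(μ+1)) (j-(μ+1)) : ℚ))) := by
      intro i _; ring
    rw [Finset.sum_congr rfl factor, ← Finset.sum_mul]
    congr 1
    rw [← Finset.sum_subset (Finset.range_subset_range.mpr (show μ+1 ≤ j from by omega))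
      (fun x _ hx => by
        simp only [mem_range, not_lt] at hx
        rw [Nat.choose_eq_zero_of_lt (show μ < x from by omega)]
        simp)]
    rw [altQ μ]
  rw [Finset.sum_congr rfl inner]
  rw [Finset.sum_eq_single_of_mem 0 (mem_range.mpr (by omega))
    (fun μ _ hμ0 => by rw [if_neg hμ0]; ring)]
  rw [if_pos rfl]
  simp only [cQ, zero_add, Nat.choose_one_right, Nat.choose_zero_right, Nat.cast_one,
    Nat.sub_self]
  push_cast
  ring
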